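/- Let Y_S, Y_Q ∈ R^{m+1} be compressed features with respect to the map p, and let A(Y_S, Y_Q) be the set of all pairs (x̃_S, x̃_Q) of vectors in R^n such that Y(x̃_S) = Y_S and Y(x̃_Q) = Y_Q. If A(Y_S, Y_Q) is nonempty, then ‖Y_S − Y_Q‖ = min over (x̃_S, x̃_Q) ∈ A(Y_S, Y_Q) of ‖x̃_S − x̃_Q‖; i.e., the compressed-feature distance equals the minimum possible original distance consistent with the compressed features. -/

import Mathlib

noncomputable section
open Matrix

set_option maxHeartbeats 2000000

section Aux
variable {n m : ℕ}

lemma inner_L_aux (P : Matrix (Fin n) (Fin m) ℝ) (z : EuclideanSpace ℝ (Fin m))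
    (w : EuclideanSpace ℝ (Fin n)) :
    (inner ℝ (Matrix.toEuclideanLin P z) w : ℝ) = inner ℝ z (Matrix.toEuclideanLin Pᵀ w) := by
  rw [← Matrix.conjTranspose_eq_transpose_of_trivial,
    Matrix.toEuclideanLin_conjTranspose_eq_adjoint, LinearMap.adjoint_inner_right]

lemma TL_aux (P : Matrix (Fin n) (Fin m) ℝ) (hP : Pᵀ * P = 1) (z : EuclideanSpace ℝ (Fin m)) :
    Matrix.toEuclideanLin Pᵀ (Matrix.toEuclideanLin P z) = z := by
  simp [Matrix.toEuclideanLin_apply, Matrix.mulVec_mulVec, hP]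

lemma norm_L_aux (P : Matrix (Fin n) (Fin m) ℝ) (hP : Pᵀ * P = 1)
    (z : EuclideanSpace ℝ (Fin m)) : ‖Matrix.toEuclideanLin P z‖ = ‖z‖ := by
  have h : ‖Matrix.toEuclideanLin P z‖ ^ 2 = ‖z‖ ^ 2 := by
    rw [← real_inner_self_eq_norm_sq, ← real_inner_self_eq_norm_sq, inner_L_aux, TL_aux P hP]
  nlinarith [norm_nonneg (Matrix.toEuclideanLin P z), norm_nonneg z]

lemma norm_sum_sq_aux (P : Matrix (Fin n) (Fin m) ℝ) (hP : Pᵀ * P = 1)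
    (d : EuclideanSpace ℝ (Fin m)) (s : EuclideanSpace ℝ (Fin n))
    (hs : Matrix.toEuclideanLin Pᵀ s = 0) :
    ‖Matrix.toEuclideanLin P d + s‖ ^ 2 = ‖d‖ ^ 2 + ‖s‖ ^ 2 := by
  rw [norm_add_sq_real, inner_L_aux, hs, inner_zero_right, norm_L_aux P hP]
  ring

lemma exists_unit_aux (hmn : m < n) (P : Matrix (Fin n) (Fin m) ℝ) :
    ∃ u : EuclideanSpace ℝ (Fin n), ‖u‖ = 1 ∧ Matrix.toEuclideanLin Pᵀ u = 0 := by
  set T := Matrix.toEuclideanLin Pᵀ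
  have hker : LinearMap.ker T ≠ ⊥ := by
    intro h
    have h1 := LinearMap.finrank_range_add_finrank_ker T
    rw [h, finrank_bot, add_zero] at h1
    have h2 : Module.finrank ℝ (LinearMap.range T) ≤ m := by
      simpa using Submodule.finrank_le (LinearMap.range T)
    simp only [finrank_euclideanSpace_fin] at h1
    omega
  obtain ⟨v, hv, hv0⟩ := Submodule.exists_mem_ne_zero_of_ne_bot hker
  refine ⟨‖v‖⁻¹ • v, ?_, ?_⟩
  · rw [norm_smul, norm_inv, norm_norm, inv_mul_cancel₀ (norm_ne_zero_iff.mpr hv0)]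
  · rw [LinearMap.map_smul, LinearMap.mem_ker.mp hv, smul_zero]

end Aux

/-- Projection map p(v) = Pᵀ(v − c). -/
noncomputable def proj {n m : ℕ} (P : Matrix (Fin n) (Fin m) ℝ)
    (c v : EuclideanSpace ℝ (Fin n)) : EuclideanSpace ℝ (Fin m) :=
  Matrix.toEuclideanLin Pᵀ (v - c)

/-- Generalized inverse q(z) = Pz + c. -/
noncomputable def qinv {n m : ℕ} (P : Matrix (Fin n) (Fin m) ℝ)
    (c : EuclideanSpace ℝ (Fin n)) (z : EuclideanSpace ℝ (Fin m)) :
    EuclideanSpace ℝ (Fin n) :=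
  Matrix.toEuclideanLin P z + c

/-- Projection distance δ(v) = ‖v − q(p(v))‖. -/
noncomputable def pdist {n m : ℕ} (P : Matrix (Fin n) (Fin m) ℝ)
    (c v : EuclideanSpace ℝ (Fin n)) : ℝ :=
  ‖v - qinv P c (proj P c v)‖


/-- Compressed feature Y(v) = (p(v), δ(v)) with the ℓ² product norm. -/
noncomputable def compFeat {n m : ℕ} (P : Matrix (Fin n) (Fin m) ℝ)
    (c v : EuclideanSpace ℝ (Fin n)) : WithLp 2 (EuclideanSpace ℝ (Fin m) × ℝ) :=
  (WithLp.equiv 2 _).symm (proj P c v, pdist P c v)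

/-- The compressed-feature distance is the minimum original distance among all
pairs of vectors consistent with the given compressed features. -/
theorem compressed_distance_is_min {n m : ℕ} (hmn : m < n)
    (P : Matrix (Fin n) (Fin m) ℝ) (hP : Pᵀ * P = 1)
    (c : EuclideanSpace ℝ (Fin n))
    (zS zQ : EuclideanSpace ℝ (Fin m)) (δS δQ : ℝ) (hδS : 0 ≤ δS) (hδQ : 0 ≤ δQ)
    (hne : {w : EuclideanSpace ℝ (Fin n) × EuclideanSpace ℝ (Fin n) |
        proj P c w.1 = zS ∧ pdist P c w.1 = δS ∧
        proj P c w.2 = zQ ∧ pdist P c w.2 = δQ}.Nonempty) :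
    IsLeast ((fun w : EuclideanSpace ℝ (Fin n) × EuclideanSpace ℝ (Fin n) =>
        ‖w.1 - w.2‖) ''
      {w | proj P c w.1 = zS ∧ pdist P c w.1 = δS ∧
           proj P c w.2 = zQ ∧ pdist P c w.2 = δQ})
      ‖((WithLp.equiv 2 (EuclideanSpace ℝ (Fin m) × ℝ)).symm (zS, δS)) -
        ((WithLp.equiv 2 (EuclideanSpace ℝ (Fin m) × ℝ)).symm (zQ, δQ))‖ := by
  set L := Matrix.toEuclideanLin P with hL
  set T := Matrix.toEuclideanLin Pᵀ with hT
  set t := ‖((WithLp.equiv 2 (EuclideanSpace ℝ (Fin m) × ℝ)).symm (zS, δS)) -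
        ((WithLp.equiv 2 (EuclideanSpace ℝ (Fin m) × ℝ)).symm (zQ, δQ))‖ with ht
  have htnn : 0 ≤ t := norm_nonneg _
  have tsq : t ^ 2 = ‖zS - zQ‖ ^ 2 + (δS - δQ) ^ 2 := by
    rw [ht, WithLp.prod_norm_sq_eq_of_L2]
    simp [Real.norm_eq_abs, sq_abs]
  constructor
  · -- membership: construct the minimizing pair
    obtain ⟨u, hu1, hu0⟩ := exists_unit_aux hmn P
    refine ⟨(L zS + c + δS • u, L zQ + c + δQ • u), ⟨?_, ?_, ?_, ?_⟩, ?_⟩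
    · show T (L zS + c + δS • u - c) = zS
      have : L zS + c + δS • u - c = L zS + δS • u := by abel
      rw [this, map_add, TL_aux P hP, LinearMap.map_smul, hu0, smul_zero, add_zero]
    · have hproj : proj P c (L zS + c + δS • u) = zS := by
        show T (L zS + c + δS • u - c) = zS
        have : L zS + c + δS • u - c = L zS + δS • u := by abel
        rw [this, map_add, TL_aux P hP, LinearMap.map_smul, hu0, smul_zero, add_zero]
      rw [pdist, hproj, qinv]
      have : L zS + c + δS • u - (L zS + c) = δS • u := by abel
      rw [this, norm_smul, hu1, mul_one, Real.norm_eq_abs, abs_of_nonneg hδS]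
    · show T (L zQ + c + δQ • u - c) = zQ
      have : L zQ + c + δQ • u - c = L zQ + δQ • u := by abel
      rw [this, map_add, TL_aux P hP, LinearMap.map_smul, hu0, smul_zero, add_zero]
    · have hproj : proj P c (L zQ + c + δQ • u) = zQ := by
        show T (L zQ + c + δQ • u - c) = zQ
        have : L zQ + c + δQ • u - c = L zQ + δQ • u := by abel
        rw [this, map_add, TL_aux P hP, LinearMap.map_smul, hu0, smul_zero, add_zero]
      rw [pdist, hproj, qinv]
      have : L zQ + c + δQ • u - (L zQ + c) = δQ • u := by abel
      rw [this, norm_smul, hu1, mul_one, Real.norm_eq_abs, abs_of_nonneg hδQ]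
    · show ‖L zS + c + δS • u - (L zQ + c + δQ • u)‖ = t
      have hdiff : L zS + c + δS • u - (L zQ + c + δQ • u)
          = L (zS - zQ) + (δS - δQ) • u := by
        rw [map_sub, sub_smul]; abel
      have hsq : ‖L zS + c + δS • u - (L zQ + c + δQ • u)‖ ^ 2 = t ^ 2 := by
        rw [hdiff, norm_sum_sq_aux P hP _ _ (by rw [LinearMap.map_smul, hu0, smul_zero]),
          norm_smul, hu1, mul_one, Real.norm_eq_abs, sq_abs, tsq]
      nlinarith [norm_nonneg (L zS + c + δS • u - (L zQ + c + δQ • u))]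
  · -- lower bound
    rintro r ⟨⟨xS, xQ⟩, ⟨h1, h2, h3, h4⟩, rfl⟩
    obtain ⟨rS, hrSdef⟩ : ∃ r : EuclideanSpace ℝ (Fin n), xS - (L zS + c) = r := ⟨_, rfl⟩
    obtain ⟨rQ, hrQdef⟩ : ∃ r : EuclideanSpace ℝ (Fin n), xQ - (L zQ + c) = r := ⟨_, rfl⟩
    have hTrS : T rS = 0 := by
      rw [← hrSdef]
      have : xS - (L zS + c) = (xS - c) - L zS := by abel
      rw [this, map_sub, TL_aux P hP, show T (xS - c) = proj P c xS from rfl, h1, sub_self]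
    have hTrQ : T rQ = 0 := by
      rw [← hrQdef]
      have : xQ - (L zQ + c) = (xQ - c) - L zQ := by abel
      rw [this, map_sub, TL_aux P hP, show T (xQ - c) = proj P c xQ from rfl, h3, sub_self]
    have hnrS : ‖rS‖ = δS := by
      rw [pdist, h1, qinv, ← hL, hrSdef] at h2; exact h2
    have hnrQ : ‖rQ‖ = δQ := by
      rw [pdist, h3, qinv, ← hL, hrQdef] at h4; exact h4
    have hdiff : xS - xQ = L (zS - zQ) + (rS - rQ) := by
      rw [map_sub, ← hrSdef, ← hrQdef]; abel
    have hsq : ‖xS - xQ‖ ^ 2 = ‖zS - zQ‖ ^ 2 + ‖rS - rQ‖ ^ 2 := by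
      rw [hdiff, norm_sum_sq_aux P hP _ _ (by rw [map_sub, hTrS, hTrQ, sub_zero])]
    have habs : |δS - δQ| ≤ ‖rS - rQ‖ := by
      rw [← hnrS, ← hnrQ]; exact abs_norm_sub_norm_le rS rQ
    show t ≤ ‖xS - xQ‖
    nlinarith [norm_nonneg (xS - xQ), sq_abs (δS - δQ), abs_nonneg (δS - δQ),
      norm_nonneg (rS - rQ)]
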